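/- arXiv:2308.01099 — 4 statements merged into one kernel-verified Lean document; each statement's English description precedes it below -/
import Mathlib

section
/- Let G be an abelian group, M ⊆ G a sharp submonoid, R a commutative ring, α : M → R a multiplicative map, and ℓ₁, ℓ₂ ∈ M elements with α(ℓ₁) = 0 and α(ℓ₂) = 0. Define S to be the set of quadruples (a₁, s₁, a₂, s₂) ∈ M × ℤ × M × ℤ such that (i) a₁ + s₁·ℓ₁ = a₂ + s₂·ℓ₂ in G, (ii) s₁ + s₂ = 0, and (iii) for each k ∈ {1,2}, either s_k ≥ 0, or (a_k + s_k·ℓ_k ∈ M and α(a_k + s_k·ℓ_k) = 0). Define T = {(a₁, a₂) ∈ M × M : ∃ s ∈ ℤ, a₂ − a₁ = s·(ℓ₁ + ℓ₂) in G}. Then the image of S under the projection (a₁, s₁, a₂, s₂) ↦ (a₁, a₂) is exactly T. -/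
lemma aux_pow {G R : Type*} [AddCommGroup G] [CommRing R] {M : AddSubmonoid G}
    (α : M → R) (hαadd : ∀ a b : M, α (a + b) = α a * α b)
    (a ℓ : M) : ∀ n : ℕ, α (a + n • ℓ) = α a * α ℓ ^ n := by
  intro n
  induction n with
  | zero => simp
  | succ n ih =>
      have : a + (n + 1) • ℓ = (a + n • ℓ) + ℓ := by
        rw [add_smul, one_smul, add_assoc]
      rw [this, hαadd, ih, pow_succ, mul_assoc]

/-- Let `G` be an abelian group, `M ⊆ G` a sharp submonoid, `R` a commutative ring,
`α : M → R` a multiplicative map (`α 0 = 1`, `α (a+b) = α a * α b`), and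
`ℓ₁, ℓ₂ ∈ M` with `α ℓ₁ = 0` and `α ℓ₂ = 0`.  Let `S` be the set of quadruples
`(a₁, s₁, a₂, s₂) ∈ M × ℤ × M × ℤ` with
(i) `a₁ + s₁ • ℓ₁ = a₂ + s₂ • ℓ₂` in `G`, (ii) `s₁ + s₂ = 0`, and
(iii) for each `k ∈ {1,2}`, either `s_k ≥ 0` or
(`a_k + s_k • ℓ_k ∈ M` and `α (a_k + s_k • ℓ_k) = 0`).
Let `T = {(a₁, a₂) ∈ M × M : ∃ s : ℤ, a₂ - a₁ = s • (ℓ₁ + ℓ₂)}`.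
Then the image of `S` under `(a₁, s₁, a₂, s₂) ↦ (a₁, a₂)` is exactly `T`. -/
theorem image_of_gluing_monoid_eq_divisibility_monoid
    {G R : Type*} [AddCommGroup G] [CommRing R]
    (M : AddSubmonoid G)
    (hsharp : ∀ a ∈ M, -a ∈ M → a = 0)
    (α : M → R) (hα0 : α 0 = 1)
    (hαadd : ∀ a b : M, α (a + b) = α a * α b)
    (ℓ₁ ℓ₂ : M) (hℓ₁ : α ℓ₁ = 0) (hℓ₂ : α ℓ₂ = 0) :
    (fun q : M × ℤ × M × ℤ => (q.1, q.2.2.1)) ''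
      {q : M × ℤ × M × ℤ |
        (q.1 : G) + q.2.1 • (ℓ₁ : G) = (q.2.2.1 : G) + q.2.2.2 • (ℓ₂ : G) ∧
        q.2.1 + q.2.2.2 = 0 ∧
        (0 ≤ q.2.1 ∨
          ∃ h : (q.1 : G) + q.2.1 • (ℓ₁ : G) ∈ M,
            α ⟨(q.1 : G) + q.2.1 • (ℓ₁ : G), h⟩ = 0) ∧
        (0 ≤ q.2.2.2 ∨
          ∃ h : (q.2.2.1 : G) + q.2.2.2 • (ℓ₂ : G) ∈ M,
            α ⟨(q.2.2.1 : G) + q.2.2.2 • (ℓ₂ : G), h⟩ = 0)} =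
    {p : M × M | ∃ s : ℤ, (p.2 : G) - (p.1 : G) = s • ((ℓ₁ : G) + (ℓ₂ : G))} := by
  ext ⟨a₁, a₂⟩
  simp only [Set.mem_image, Set.mem_setOf_eq]
  constructor
  · rintro ⟨⟨b₁, s₁, b₂, s₂⟩, hq, heq⟩
    simp only at hq heq
    obtain ⟨h1, h2, -, -⟩ := hq
    obtain ⟨rfl, rfl⟩ : b₁ = a₁ ∧ b₂ = a₂ := by simpa [Prod.ext_iff] using heq
    refine ⟨s₁, ?_⟩
    have h2' : s₂ = -s₁ := by omega
    subst h2'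
    linear_combination (norm := module) -h1
  · rintro ⟨s, hs⟩
    have key : (a₁ : G) + s • (ℓ₁ : G) = (a₂ : G) + (-s) • (ℓ₂ : G) := by
      linear_combination (norm := module) -hs
    refine ⟨(a₁, s, a₂, -s), ⟨key, by ring, ?_, ?_⟩, rfl⟩
    · rcases le_or_gt 0 s with h | h
      · exact Or.inl h
      · right
        set n : ℕ := (-s).toNat with hn
        have hns : (-s : ℤ) = (n : ℤ) := by omega
        have hx : (a₁ : G) + s • (ℓ₁ : G) = ((a₂ + n • ℓ₂ : M) : G) := by
          rw [key]
          push_cast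
          rw [← natCast_zsmul, ← hns]
        have hmem : (a₁ : G) + s • (ℓ₁ : G) ∈ M := hx ▸ (a₂ + n • ℓ₂ : M).2
        refine ⟨hmem, ?_⟩
        have he : (⟨(a₁ : G) + s • (ℓ₁ : G), hmem⟩ : M) = a₂ + n • ℓ₂ := Subtype.ext hx
        rw [he, aux_pow α hαadd, hℓ₂, zero_pow (by omega), mul_zero]
    · rcases le_or_gt 0 (-s) with h | h
      · exact Or.inl h
      · right
        set n : ℕ := s.toNat with hn
        have hns : (s : ℤ) = (n : ℤ) := by omega
        have hx : (a₂ : G) + (-s) • (ℓ₂ : G) = ((a₁ + n • ℓ₁ : M) : G) := by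
          rw [← key]
          push_cast
          rw [← natCast_zsmul, ← hns]
        have hmem : (a₂ : G) + (-s) • (ℓ₂ : G) ∈ M := hx ▸ (a₁ + n • ℓ₁ : M).2
        refine ⟨hmem, ?_⟩
        have he : (⟨(a₂ : G) + (-s) • (ℓ₂ : G), hmem⟩ : M) = a₁ + n • ℓ₁ := Subtype.ext hx
        rw [he, aux_pow α hαadd, hℓ₁, zero_pow (by omega), mul_zero]
end

section
/- Let G be an abelian group, M ⊆ G a sharp and saturated submonoid, R a commutative ring, α : M → R a multiplicative map, and ℓ₁, ℓ₂ ∈ M elements with α(ℓ₁) = 0, α(ℓ₂) = 0 and ℓ₁ + ℓ₂ ≠ 0. Define S to be the set of quadruples (a₁, s₁, a₂, s₂) ∈ M × ℤ × M × ℤ such that (i) a₁ + s₁·ℓ₁ = a₂ + s₂·ℓ₂ in G, (ii) s₁ + s₂ = 0, and (iii) for each k ∈ {1,2}, either s_k ≥ 0, or (a_k + s_k·ℓ_k ∈ M and α(a_k + s_k·ℓ_k) = 0). Define T = {(a₁, a₂) ∈ M × M : ∃ s ∈ ℤ, a₂ − a₁ = s·(ℓ₁ + ℓ₂) in G}. Then: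 (1) the projection (a₁, s₁, a₂, s₂) ↦ (a₁, a₂) is a bijection from S onto T; and (2) T is a submonoid of M × M. -/
/-- Let `G` be an abelian group, `M ⊆ G` a sharp and saturated submonoid, `R` a
commutative ring, `α : M → R` a multiplicative map, and `ℓ₁, ℓ₂ ∈ M` with
`α ℓ₁ = 0`, `α ℓ₂ = 0` and `ℓ₁ + ℓ₂ ≠ 0`.  With `S` and `T` as in Statement 0:
(1) the projection `(a₁, s₁, a₂, s₂) ↦ (a₁, a₂)` is a bijection from `S` onto
`T`; and (2) `T` is a submonoid of `M × M`. -/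
theorem gluing_monoid_bijOn_and_submonoid
    {G R : Type*} [AddCommGroup G] [CommRing R]
    (M : AddSubmonoid G)
    (hsharp : ∀ a ∈ M, -a ∈ M → a = 0)
    (hsat : ∀ g : G, ∀ n : ℤ, 1 ≤ n → n • g ∈ M → g ∈ M)
    (α : M → R) (hα0 : α 0 = 1)
    (hαadd : ∀ a b : M, α (a + b) = α a * α b)
    (ℓ₁ ℓ₂ : M) (hℓ₁ : α ℓ₁ = 0) (hℓ₂ : α ℓ₂ = 0)
    (hne : (ℓ₁ : G) + (ℓ₂ : G) ≠ 0) :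
    Set.BijOn (fun q : M × ℤ × M × ℤ => (q.1, q.2.2.1))
      {q : M × ℤ × M × ℤ |
        (q.1 : G) + q.2.1 • (ℓ₁ : G) = (q.2.2.1 : G) + q.2.2.2 • (ℓ₂ : G) ∧
        q.2.1 + q.2.2.2 = 0 ∧
        (0 ≤ q.2.1 ∨
          ∃ h : (q.1 : G) + q.2.1 • (ℓ₁ : G) ∈ M,
            α ⟨(q.1 : G) + q.2.1 • (ℓ₁ : G), h⟩ = 0) ∧
        (0 ≤ q.2.2.2 ∨
          ∃ h : (q.2.2.1 : G) + q.2.2.2 • (ℓ₂ : G) ∈ M,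
            α ⟨(q.2.2.1 : G) + q.2.2.2 • (ℓ₂ : G), h⟩ = 0)}
      {p : M × M | ∃ s : ℤ, (p.2 : G) - (p.1 : G) = s • ((ℓ₁ : G) + (ℓ₂ : G))} ∧
    ∃ N : AddSubmonoid (M × M),
      (N : Set (M × M)) =
        {p : M × M | ∃ s : ℤ, (p.2 : G) - (p.1 : G) = s • ((ℓ₁ : G) + (ℓ₂ : G))} := by
  have hxM : (ℓ₁ : G) + (ℓ₂ : G) ∈ M := add_mem ℓ₁.2 ℓ₂.2
  have htf : ∀ s : ℤ, s • ((ℓ₁ : G) + (ℓ₂ : G)) = 0 → s = 0 := by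
    intro s hs
    by_contra h
    have hnx : -((ℓ₁ : G) + (ℓ₂ : G)) ∈ M := by
      rcases lt_or_gt_of_ne h with hlt | hgt
      · refine hsat _ (-s) (by omega) ?_
        rw [smul_neg, neg_smul, neg_neg, hs]; exact zero_mem M
      · refine hsat _ s hgt ?_
        rw [smul_neg, hs, neg_zero]; exact zero_mem M
    exact hne (hsharp _ hxM hnx)
  have hαz : ∀ (b ℓ : M), α ℓ = 0 → ∀ n : ℕ, 1 ≤ n → α (b + n • ℓ) = 0 := by
    intro b ℓ hℓ n hn
    obtain ⟨m, rfl⟩ := Nat.exists_eq_add_of_le hn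
    rw [add_comm 1 m, succ_nsmul, ← add_assoc, hαadd, hℓ, mul_zero]
  have key : ∀ (u v : G) (s : ℤ), v - u = s • ((ℓ₁ : G) + (ℓ₂ : G)) →
      u + s • (ℓ₁ : G) = v + (-s) • (ℓ₂ : G) := by
    intro u v s h
    rw [sub_eq_iff_eq_add] at h
    rw [h, smul_add, neg_smul]; abel
  have key2 : ∀ (u v : G) (s : ℤ), u + s • (ℓ₁ : G) = v + (-s) • (ℓ₂ : G) →
      v - u = s • ((ℓ₁ : G) + (ℓ₂ : G)) := by
    intro u v s h
    have hv : v = (u + s • (ℓ₁ : G)) - (-s) • (ℓ₂ : G) := eq_sub_of_add_eq h.symm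
    rw [hv, smul_add, neg_smul]; abel
  constructor
  · refine ⟨?_, ?_, ?_⟩
    · rintro ⟨a₁, s₁, a₂, s₂⟩ ⟨h1, h2, -, -⟩
      have h2' : s₁ + s₂ = 0 := h2
      have hs₂ : s₂ = -s₁ := by omega
      subst hs₂
      exact ⟨s₁, key2 _ _ s₁ h1⟩
    · rintro ⟨a₁, s₁, a₂, s₂⟩ ⟨h1, h2, -, -⟩ ⟨a₁', s₁', a₂', s₂'⟩ ⟨h1', h2', -, -⟩ hpq
      simp only [Prod.mk.injEq] at hpq
      obtain ⟨rfl, rfl⟩ := hpq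
      have g2 : s₁ + s₂ = 0 := h2
      have g2' : s₁' + s₂' = 0 := h2'
      have hs₂ : s₂ = -s₁ := by omega
      have hs₂' : s₂' = -s₁' := by omega
      subst hs₂ hs₂'
      have e1 : (a₂ : G) - (a₁ : G) = s₁ • ((ℓ₁ : G) + (ℓ₂ : G)) := key2 _ _ s₁ h1
      have e2 : (a₂ : G) - (a₁ : G) = s₁' • ((ℓ₁ : G) + (ℓ₂ : G)) := key2 _ _ s₁' h1'
      have : (s₁ - s₁') • ((ℓ₁ : G) + (ℓ₂ : G)) = 0 := by
        rw [sub_smul, ← e1, ← e2, sub_self]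
      have := htf _ this
      have : s₁ = s₁' := by omega
      subst this
      rfl
    · rintro ⟨a₁, a₂⟩ ⟨s, hs⟩
      have hs' : (a₂ : G) - (a₁ : G) = s • ((ℓ₁ : G) + (ℓ₂ : G)) := hs
      refine ⟨⟨a₁, s, a₂, -s⟩, ⟨key _ _ s hs', by show s + -s = 0; omega, ?_, ?_⟩, rfl⟩
      · -- condition for k = 1
        rcases le_or_gt 0 s with hs0 | hs0
        · exact Or.inl hs0
        · refine Or.inr ?_
          set m := (-s).toNat with hmdef
          have hm : ((m : ℤ)) = -s := Int.toNat_of_nonneg (by omega)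
          have heq : (a₁ : G) + s • (ℓ₁ : G) = ((a₂ + m • ℓ₂ : M) : G) := by
            push_cast
            rw [← natCast_zsmul, hm]
            exact key _ _ s hs'
          refine ⟨heq ▸ (a₂ + m • ℓ₂).2, ?_⟩
          have he : (⟨(a₁ : G) + s • (ℓ₁ : G), heq ▸ (a₂ + m • ℓ₂).2⟩ : M)
              = a₂ + m • ℓ₂ := Subtype.ext heq
          rw [he]
          exact hαz a₂ ℓ₂ hℓ₂ m (by omega)
      · -- condition for k = 2
        rcases le_or_gt s 0 with hs0 | hs0
        · exact Or.inl (by show (0:ℤ) ≤ -s; omega)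
        · refine Or.inr ?_
          set m := s.toNat with hmdef
          have hm : ((m : ℤ)) = s := Int.toNat_of_nonneg (by omega)
          have heq : (a₂ : G) + (-s) • (ℓ₂ : G) = ((a₁ + m • ℓ₁ : M) : G) := by
            push_cast
            rw [← natCast_zsmul, hm]
            exact (key _ _ s hs').symm
          refine ⟨heq ▸ (a₁ + m • ℓ₁).2, ?_⟩
          have he : (⟨(a₂ : G) + (-s) • (ℓ₂ : G), heq ▸ (a₁ + m • ℓ₁).2⟩ : M)
              = a₁ + m • ℓ₁ := Subtype.ext heq
          rw [he]
          exact hαz a₁ ℓ₁ hℓ₁ m (by omega)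
  · refine ⟨⟨⟨{p : M × M | ∃ s : ℤ, (p.2 : G) - (p.1 : G) = s • ((ℓ₁ : G) + (ℓ₂ : G))}, ?_⟩, ?_⟩, rfl⟩
    · rintro p q ⟨s, hs⟩ ⟨t, ht⟩
      refine ⟨s + t, ?_⟩
      have h1 : ((p + q).1 : G) = (p.1 : G) + (q.1 : G) := rfl
      have h2 : ((p + q).2 : G) = (p.2 : G) + (q.2 : G) := rfl
      show ((p + q).2 : G) - ((p + q).1 : G) = (s + t) • ((ℓ₁ : G) + (ℓ₂ : G))
      rw [h1, h2, add_smul, ← hs, ← ht]; abel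
    · exact ⟨0, by simp⟩
end

section
/- Let P = {(0,0)} ∪ {(x,y) ∈ ℤ × ℤ : x ≥ 0 and x + y > 0}, a subset of ℤ × ℤ. Then: (1) P is an (additive) submonoid of ℤ × ℤ; (2) P is saturated in ℤ × ℤ, i.e. for every v ∈ ℤ × ℤ and integer n ≥ 1 with n·v ∈ P one has v ∈ P; and (3) P is not finitely generated as a monoid. -/
/-- The characteristic monoid at the marking of the pierced standard local model:
`P = {(0,0)} ∪ {(x,y) ∈ ℤ × ℤ : x ≥ 0 ∧ x + y > 0}`. -/
def piercedMonoidSet : Set (ℤ × ℤ) :=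
  {((0 : ℤ), (0 : ℤ))} ∪ {p : ℤ × ℤ | 0 ≤ p.1 ∧ 0 < p.1 + p.2}

lemma pierced_mem_iff (p : ℤ × ℤ) :
    p ∈ piercedMonoidSet ↔ (p.1 = 0 ∧ p.2 = 0) ∨ (0 ≤ p.1 ∧ 0 < p.1 + p.2) := by
  simp [piercedMonoidSet, Prod.ext_iff]

lemma pierced_eq_zero {p : ℤ × ℤ} (hp : p ∈ piercedMonoidSet) (h : p.1 + p.2 ≤ 0) :
    p = 0 := by
  rw [pierced_mem_iff] at hp
  have : p.1 = 0 ∧ p.2 = 0 := by omega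
  exact Prod.ext this.1 this.2

noncomputable def piercedSubmonoid : AddSubmonoid (ℤ × ℤ) where
  carrier := piercedMonoidSet
  zero_mem' := by simp [pierced_mem_iff]
  add_mem' := by
    intro a b ha hb
    rw [pierced_mem_iff] at *
    simp only [Prod.fst_add, Prod.snd_add]
    omega

/-- Let `P = {(0,0)} ∪ {(x,y) ∈ ℤ × ℤ : x ≥ 0 ∧ x + y > 0}`.  Then:
(1) `P` is an additive submonoid of `ℤ × ℤ`;
(2) `P` is saturated in `ℤ × ℤ`: for every `v ∈ ℤ × ℤ` and integer `n ≥ 1`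
with `n • v ∈ P` one has `v ∈ P`; and
(3) `P` is not finitely generated as a monoid: no finite subset of `P`
generates `P` as a submonoid. -/
theorem piercedMonoid_submonoid_saturated_not_fg :
    (∃ N : AddSubmonoid (ℤ × ℤ), (N : Set (ℤ × ℤ)) = piercedMonoidSet) ∧
    (∀ v : ℤ × ℤ, ∀ n : ℤ, 1 ≤ n → n • v ∈ piercedMonoidSet →
      v ∈ piercedMonoidSet) ∧
    (∀ s : Finset (ℤ × ℤ), (s : Set (ℤ × ℤ)) ⊆ piercedMonoidSet →
      (AddSubmonoid.closure (s : Set (ℤ × ℤ)) : Set (ℤ × ℤ)) ≠ piercedMonoidSet) := by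
  refine ⟨⟨piercedSubmonoid, rfl⟩, ?_, ?_⟩
  · intro v n hn hv
    rw [pierced_mem_iff] at *
    simp only [Prod.smul_fst, Prod.smul_snd, smul_eq_mul] at hv
    rcases hv with ⟨h1, h2⟩ | ⟨h1, h2⟩
    · left
      constructor <;>
        · by_contra h
          rcases lt_or_gt_of_ne h with h' | h' <;> nlinarith
    · right
      constructor
      · nlinarith
      · nlinarith [mul_pos_iff.mp (by linarith : (0:ℤ) < n * (v.1 + v.2))]
  · intro s hs hcl
    set X : ℤ := (s.sup fun a => a.1.toNat) + 1 with hX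
    have hX1 : 1 ≤ X := by omega
    have hg : (X, 1 - X) ∈ piercedMonoidSet := by
      rw [pierced_mem_iff]; right; constructor <;> omega
    rw [← hcl] at hg
    have key : ∀ p ∈ AddSubmonoid.closure (s : Set (ℤ × ℤ)),
        p ∈ piercedMonoidSet ∧ (p.1 + p.2 ≤ 1 → p = 0 ∨ p ∈ s) := by
      intro p hp
      induction hp using AddSubmonoid.closure_induction with
      | mem x hx => exact ⟨hs hx, fun _ => Or.inr hx⟩
      | zero => exact ⟨by rw [pierced_mem_iff]; left; simp, fun _ => Or.inl rfl⟩
      | add x y hx hy ihx ihy =>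
        obtain ⟨hxP, hx'⟩ := ihx
        obtain ⟨hyP, hy'⟩ := ihy
        refine ⟨(piercedSubmonoid.add_mem hxP hyP : _), fun hsum => ?_⟩
        simp only [Prod.fst_add, Prod.snd_add] at hsum
        have hx0 : 0 ≤ x.1 + x.2 := by
          rw [pierced_mem_iff] at hxP; omega
        have hy0 : 0 ≤ y.1 + y.2 := by
          rw [pierced_mem_iff] at hyP; omega
        rcases le_or_gt (x.1 + x.2) 0 with h | h
        · have := pierced_eq_zero hxP h
          subst this
          simpa using hy' (by omega)
        · have : y = 0 := pierced_eq_zero hyP (by omega)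
          subst this
          simpa using hx' (by omega)
    obtain ⟨-, h2⟩ := key _ hg
    rcases h2 (by simp) with h | h
    · have : X = 0 := congrArg Prod.fst h
      omega
    · have := Finset.le_sup (f := fun a => a.1.toNat) h
      simp only at this
      omega
end

section
/- Let G be an abelian group, M ⊆ G a sharp submonoid, R a commutative ring, α : M → R a multiplicative map, and ℓ ∈ M. Define M̊ = {(m, s) ∈ M × ℤ : s ≥ 0, or (m + s·ℓ ∈ M and α(m + s·ℓ) = 0)}. Then: (1) M̊ is an (additive) submonoid of M × ℤ; (2) for every (m, s) ∈ M̊ the element m + s·ℓ of G lies in M; and (3) the resulting map M̊ → M, (m, s) ↦ m + s·ℓ, is a monoid homomorphism. -/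
/-- Let `G` be an abelian group, `M ⊆ G` a sharp submonoid, `R` a commutative
ring, `α : M → R` a multiplicative map, and `ℓ ∈ M`.  Define
`M̊ = {(m, s) ∈ M × ℤ : s ≥ 0, or (m + s • ℓ ∈ M and α (m + s • ℓ) = 0)}`.
Then: (1) `M̊` is an additive submonoid of `M × ℤ`;
(2) for every `(m, s) ∈ M̊` the element `m + s • ℓ` of `G` lies in `M`; and
(3) the resulting map `M̊ → M, (m, s) ↦ m + s • ℓ`, is a monoid homomorphism. -/
theorem pierced_monoid_and_section_hom
    {G R : Type*} [AddCommGroup G] [CommRing R]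
    (M : AddSubmonoid G)
    (hsharp : ∀ a ∈ M, -a ∈ M → a = 0)
    (α : M → R) (hα0 : α 0 = 1)
    (hαadd : ∀ a b : M, α (a + b) = α a * α b)
    (ℓ : M) :
    -- (2): every element of M̊ has its associated element `m + s • ℓ` in M
    (∀ p : M × ℤ,
        (0 ≤ p.2 ∨ ∃ h : ((p.1 : G) + p.2 • (ℓ : G)) ∈ M,
            α ⟨(p.1 : G) + p.2 • (ℓ : G), h⟩ = 0) →
        ((p.1 : G) + p.2 • (ℓ : G)) ∈ M) ∧
    -- (1) and (3): M̊ is a submonoid of M × ℤ, and `(m, s) ↦ m + s • ℓ` is a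
    -- monoid homomorphism M̊ → M
    (∃ N : AddSubmonoid (M × ℤ),
      (N : Set (M × ℤ)) =
        {p : M × ℤ |
          0 ≤ p.2 ∨ ∃ h : ((p.1 : G) + p.2 • (ℓ : G)) ∈ M,
            α ⟨(p.1 : G) + p.2 • (ℓ : G), h⟩ = 0} ∧
      ∃ f : N →+ M, ∀ p : N,
        ((f p : G)) = ((p : M × ℤ).1 : G) + (p : M × ℤ).2 • (ℓ : G)) := by
  have key : ∀ p : M × ℤ,
      (0 ≤ p.2 ∨ ∃ h : ((p.1 : G) + p.2 • (ℓ : G)) ∈ M,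
          α ⟨(p.1 : G) + p.2 • (ℓ : G), h⟩ = 0) →
      ((p.1 : G) + p.2 • (ℓ : G)) ∈ M := by
    rintro ⟨m, s⟩ (hs | ⟨h, -⟩)
    · obtain ⟨n, rfl⟩ := Int.eq_ofNat_of_zero_le hs
      exact M.add_mem m.2 (by simpa using M.nsmul_mem ℓ.2 n)
    · exact h
  refine ⟨key, ?_⟩
  have addmem : ∀ p q : M × ℤ,
      (0 ≤ p.2 ∨ ∃ h : ((p.1 : G) + p.2 • (ℓ : G)) ∈ M,
          α ⟨(p.1 : G) + p.2 • (ℓ : G), h⟩ = 0) →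
      (0 ≤ q.2 ∨ ∃ h : ((q.1 : G) + q.2 • (ℓ : G)) ∈ M,
          α ⟨(q.1 : G) + q.2 • (ℓ : G), h⟩ = 0) →
      (0 ≤ (p + q).2 ∨ ∃ h : (((p + q).1 : G) + (p + q).2 • (ℓ : G)) ∈ M,
          α ⟨((p + q).1 : G) + (p + q).2 • (ℓ : G), h⟩ = 0) := by
    rintro ⟨m, s⟩ ⟨n, t⟩ hp hq
    simp only [Prod.fst_add, Prod.snd_add] at *
    rcases le_or_gt 0 (s + t) with h | h
    · exact Or.inl h
    · right
      have ha := key ⟨m, s⟩ hp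
      have hb := key ⟨n, t⟩ hq
      have heq : (((m + n : M) : G)) + (s + t) • (ℓ : G)
          = ((m : G) + s • (ℓ : G)) + ((n : G) + t • (ℓ : G)) := by
        push_cast; rw [add_smul]; abel
      have hmem : (((m + n : M) : G)) + (s + t) • (ℓ : G) ∈ M := by
        rw [heq]; exact M.add_mem ha hb
      refine ⟨hmem, ?_⟩
      have hsum : (⟨(((m + n : M) : G)) + (s + t) • (ℓ : G), hmem⟩ : M)
          = ⟨(m : G) + s • (ℓ : G), ha⟩ + ⟨(n : G) + t • (ℓ : G), hb⟩ :=
        Subtype.ext heq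
      rw [hsum, hαadd]
      rcases hp with hp | ⟨_, hp0⟩
      · rcases hq with hq | ⟨_, hq0⟩
        · exact absurd (add_nonneg hp hq) (not_le.mpr h)
        · rw [hq0, mul_zero]
      · rw [hp0, zero_mul]
  refine ⟨⟨⟨{p : M × ℤ |
          0 ≤ p.2 ∨ ∃ h : ((p.1 : G) + p.2 • (ℓ : G)) ∈ M,
            α ⟨(p.1 : G) + p.2 • (ℓ : G), h⟩ = 0},
      fun {p q} hp hq => addmem p q hp hq⟩, Or.inl le_rfl⟩, rfl, ?_⟩
  refine ⟨{ toFun := fun p => (⟨((p : M × ℤ).1 : G) + (p : M × ℤ).2 • (ℓ : G), key _ p.2⟩ : M)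
            map_zero' := by simp
            map_add' := by
              rintro ⟨⟨m, s⟩, hp⟩ ⟨⟨n, t⟩, hq⟩
              apply Subtype.ext
              show ((m + n : M) : G) + (s + t) • (ℓ : G) = _
              push_cast
              rw [add_smul]; abel }, fun p => rfl⟩
end
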